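/- Let f₀ : ℝ → ℝ be a bounded continuous function, let a ∈ ℝ, ε > 0, and suppose f₀ is affine on the interval (a−ε, a+ε), i.e. there exist reals m, n with f₀(y) = m·y − n for all y ∈ (a−ε, a+ε). Define F(ρ,η) = (ρ^{3/2}/2) ∫_ℝ f₀(y)(ρ² + (η−y)²)^{−3/2} dy. Then there is a constant C > 0 such that |√ρ·F(ρ,η) − f₀(η)| ≤ C·ρ² for all η with |η − a| ≤ ε/2 and all ρ with 0 < ρ ≤ ε/2. -/

import Mathlib

open MeasureTheory

/-- The smeared eigenfunction with boundary data f₀. -/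
noncomputable def smearedF (f₀ : ℝ → ℝ) (ρ η : ℝ) : ℝ :=
  ρ ^ ((3 : ℝ) / 2) / 2 * ∫ y : ℝ, f₀ y * (ρ ^ 2 + (η - y) ^ 2) ^ (-(3 : ℝ) / 2)

set_option maxHeartbeats 1000000

namespace SmearedAux

open Filter Set Real Topology



lemma rpow_neg_three_half {x : ℝ} (hx : 0 < x) :
    x ^ (-(3:ℝ)/2) = 1 / (x * Real.sqrt x) := by
  have h1 : x ^ ((3:ℝ)/2) = x * Real.sqrt x := by
    have : ((3:ℝ)/2) = 1 + 1/2 := by norm_num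
    rw [this, Real.rpow_add hx, Real.rpow_one, ← Real.sqrt_eq_rpow]
  rw [show (-(3:ℝ)/2) = -((3:ℝ)/2) by ring, Real.rpow_neg hx.le, h1, one_div]

lemma continuous_kernel (c : ℝ) (hc : 0 < c) :
    Continuous (fun t : ℝ => (c + t ^ 2) ^ (-(3:ℝ)/2)) := by
  apply Continuous.rpow_const (by continuity)
  intro t; left; positivity

lemma integrable_inv_c (c : ℝ) (hc : 0 < c) :
    Integrable (fun t : ℝ => (c + t ^ 2)⁻¹) := by
  have hcont : Continuous (fun t : ℝ => (c + t ^ 2)⁻¹) := by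
    apply Continuous.inv₀ (by continuity); intro t; positivity
  set d := min c 1 with hd
  have hd0 : 0 < d := lt_min hc one_pos
  refine ((integrable_inv_one_add_sq.const_mul d⁻¹).mono' hcont.aestronglyMeasurable ?_)
  filter_upwards with t
  have h1 : d * (1 + t ^ 2) ≤ c + t ^ 2 := by
    have h2 : d ≤ c := min_le_left _ _
    have h3 : d ≤ 1 := min_le_right _ _
    nlinarith [sq_nonneg t]
  have h4 : (0:ℝ) < d * (1 + t ^ 2) := by positivity
  rw [Real.norm_eq_abs, abs_of_nonneg (by positivity : (0:ℝ) ≤ (c + t ^ 2)⁻¹)]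
  calc (c + t ^ 2)⁻¹ ≤ (d * (1 + t ^ 2))⁻¹ := by
        exact inv_anti₀ h4 h1
    _ = d⁻¹ * (1 + t ^ 2)⁻¹ := by rw [mul_inv]

lemma integrable_kernel (c : ℝ) (hc : 0 < c) :
    Integrable (fun t : ℝ => (c + t ^ 2) ^ (-(3:ℝ)/2)) := by
  refine ((integrable_inv_c c hc).const_mul (Real.sqrt c)⁻¹).mono'
    (continuous_kernel c hc).aestronglyMeasurable ?_
  filter_upwards with t
  have h0 : (0:ℝ) < c + t ^ 2 := by positivity
  rw [Real.norm_eq_abs, abs_of_nonneg (Real.rpow_nonneg h0.le _), rpow_neg_three_half h0]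
  have hs : Real.sqrt c ≤ Real.sqrt (c + t ^ 2) := Real.sqrt_le_sqrt (by nlinarith)
  have hsc : (0:ℝ) < Real.sqrt c := Real.sqrt_pos.2 hc
  calc 1 / ((c + t ^ 2) * Real.sqrt (c + t ^ 2))
      ≤ 1 / ((c + t ^ 2) * Real.sqrt c) := by
        gcongr
    _ = (Real.sqrt c)⁻¹ * (c + t ^ 2)⁻¹ := by
        rw [one_div, mul_inv, mul_comm]

lemma integrable_mul_kernel (c : ℝ) (hc : 0 < c) :
    Integrable (fun t : ℝ => t * (c + t ^ 2) ^ (-(3:ℝ)/2)) := by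
  have hcont : Continuous (fun t : ℝ => t * (c + t ^ 2) ^ (-(3:ℝ)/2)) :=
    continuous_id.mul (continuous_kernel c hc)
  refine (integrable_inv_c c hc).mono' hcont.aestronglyMeasurable ?_
  filter_upwards with t
  have h0 : (0:ℝ) < c + t ^ 2 := by positivity
  have hs : (0:ℝ) < Real.sqrt (c + t ^ 2) := Real.sqrt_pos.2 h0
  rw [Real.norm_eq_abs, abs_mul, abs_of_nonneg (Real.rpow_nonneg h0.le _), rpow_neg_three_half h0]
  have habs : |t| ≤ Real.sqrt (c + t ^ 2) := by
    rw [← Real.sqrt_sq_eq_abs]; exact Real.sqrt_le_sqrt (by nlinarith)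
  calc |t| * (1 / ((c + t ^ 2) * Real.sqrt (c + t ^ 2)))
      ≤ Real.sqrt (c + t ^ 2) * (1 / ((c + t ^ 2) * Real.sqrt (c + t ^ 2))) := by
        gcongr
    _ = (c + t ^ 2)⁻¹ := by field_simp

private lemma alg1 (c t s : ℝ) (hc : 0 < c) (hs : 0 < s) (hsq : s ^ 2 = c + t ^ 2) :
    1 / ((c + t ^ 2) * s) = (1 * (c * s) - t * (c * (2 * t / (2 * s)))) / (c * s) ^ 2 := by
  rw [← hsq]
  field_simp
  linear_combination (-1 : ℝ) * hsq

private lemma alg2 (c t s : ℝ) (hs : 0 < s) (hsq : s ^ 2 = c + t ^ 2) :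
    t * (1 / ((c + t ^ 2) * s)) = -(-(2 * t / (2 * s)) / s ^ 2) := by
  rw [← hsq]
  field_simp

lemma hasDerivAt_primF (c : ℝ) (hc : 0 < c) (t : ℝ) :
    HasDerivAt (fun t : ℝ => t / (c * Real.sqrt (c + t ^ 2)))
      ((c + t ^ 2) ^ (-(3:ℝ)/2)) t := by
  have h0 : (0:ℝ) < c + t ^ 2 := by positivity
  have hs : (0:ℝ) < Real.sqrt (c + t ^ 2) := Real.sqrt_pos.2 h0
  have hsq : Real.sqrt (c + t ^ 2) ^ 2 = c + t ^ 2 := Real.sq_sqrt h0.le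
  have hinner : HasDerivAt (fun t : ℝ => c + t ^ 2) (2 * t) t := by
    simpa using ((hasDerivAt_pow 2 t).const_add c)
  have hsqrt : HasDerivAt (fun t : ℝ => Real.sqrt (c + t ^ 2))
      (2 * t / (2 * Real.sqrt (c + t ^ 2))) t := hinner.sqrt h0.ne'
  have hden : HasDerivAt (fun t : ℝ => c * Real.sqrt (c + t ^ 2))
      (c * (2 * t / (2 * Real.sqrt (c + t ^ 2)))) t := hsqrt.const_mul c
  have hne : c * Real.sqrt (c + t ^ 2) ≠ 0 := by positivity
  have hdiv := (hasDerivAt_id t).div hden hne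
  refine hdiv.congr_deriv ?_
  rw [rpow_neg_three_half h0]
  simp only [id_eq]
  exact (alg1 c t _ hc hs hsq).symm

lemma hasDerivAt_primG (c : ℝ) (hc : 0 < c) (t : ℝ) :
    HasDerivAt (fun t : ℝ => -(Real.sqrt (c + t ^ 2))⁻¹)
      (t * (c + t ^ 2) ^ (-(3:ℝ)/2)) t := by
  have h0 : (0:ℝ) < c + t ^ 2 := by positivity
  have hs : (0:ℝ) < Real.sqrt (c + t ^ 2) := Real.sqrt_pos.2 h0
  have hsq : Real.sqrt (c + t ^ 2) ^ 2 = c + t ^ 2 := Real.sq_sqrt h0.le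
  have hinner : HasDerivAt (fun t : ℝ => c + t ^ 2) (2 * t) t := by
    simpa using ((hasDerivAt_pow 2 t).const_add c)
  have hsqrt : HasDerivAt (fun t : ℝ => Real.sqrt (c + t ^ 2))
      (2 * t / (2 * Real.sqrt (c + t ^ 2))) t := hinner.sqrt h0.ne'
  have hinv := (hsqrt.inv hs.ne').neg
  refine hinv.congr_deriv ?_
  rw [rpow_neg_three_half h0]
  exact (alg2 c t _ hs hsq).symm

lemma tendsto_primF_atTop (c : ℝ) (hc : 0 < c) :
    Tendsto (fun t : ℝ => t / (c * Real.sqrt (c + t ^ 2))) atTop (𝓝 (1 / c)) := by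
  have h1 : Tendsto (fun t : ℝ => c / t ^ 2) atTop (𝓝 0) := by
    simpa [div_eq_mul_inv] using (tendsto_pow_atTop (two_ne_zero)).inv_tendsto_atTop.const_mul c
  have h2 : Tendsto (fun t : ℝ => Real.sqrt (c / t ^ 2 + 1)) atTop (𝓝 1) := by
    have hadd : Tendsto (fun t : ℝ => c / t ^ 2 + 1) atTop (𝓝 (0 + 1)) :=
      h1.add tendsto_const_nhds
    have := (Real.continuous_sqrt.tendsto (0 + 1)).comp hadd
    simpa [Function.comp_def] using this
  have h3 : Tendsto (fun t : ℝ => 1 / (c * Real.sqrt (c / t ^ 2 + 1))) atTop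
      (𝓝 (1 / c)) := by
    have hmul : Tendsto (fun t : ℝ => c * Real.sqrt (c / t ^ 2 + 1)) atTop (𝓝 (c * 1)) :=
      tendsto_const_nhds.mul h2
    have hinv := hmul.inv₀ (by simpa using hc.ne')
    simp only [one_div]
    simpa using hinv
  refine h3.congr' ?_
  filter_upwards [eventually_gt_atTop (0:ℝ)] with t ht
  have h0 : (0:ℝ) < c + t ^ 2 := by positivity
  have heq : Real.sqrt (c / t ^ 2 + 1) = Real.sqrt (c + t ^ 2) / t := by
    rw [show c / t ^ 2 + 1 = (c + t ^ 2) / t ^ 2 by field_simp,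
      Real.sqrt_div h0.le, Real.sqrt_sq ht.le]
  rw [heq]
  field_simp

lemma tendsto_primF_atBot (c : ℝ) (hc : 0 < c) :
    Tendsto (fun t : ℝ => t / (c * Real.sqrt (c + t ^ 2))) atBot (𝓝 (-(1 / c))) := by
  have h := ((tendsto_primF_atTop c hc).comp tendsto_neg_atBot_atTop).neg
  refine h.congr fun t => ?_
  simp only [Function.comp_apply, neg_sq, neg_div, neg_neg]

lemma tendsto_sqrt_atTop' : Tendsto Real.sqrt atTop atTop := by
  refine tendsto_atTop_atTop.2 fun b => ⟨b ^ 2, fun x hx => ?_⟩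
  calc b ≤ |b| := le_abs_self b
    _ = Real.sqrt (b ^ 2) := (Real.sqrt_sq_eq_abs b).symm
    _ ≤ Real.sqrt x := Real.sqrt_le_sqrt hx

lemma tendsto_primG_atTop (c : ℝ) (hc : 0 < c) :
    Tendsto (fun t : ℝ => -(Real.sqrt (c + t ^ 2))⁻¹) atTop (𝓝 0) := by
  have hct : Tendsto (fun t : ℝ => c + t ^ 2) atTop atTop :=
    tendsto_atTop_add_const_left _ c (tendsto_pow_atTop two_ne_zero)
  have := ((tendsto_sqrt_atTop'.comp hct).inv_tendsto_atTop).neg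
  simpa using this

lemma tendsto_primG_atBot (c : ℝ) (hc : 0 < c) :
    Tendsto (fun t : ℝ => -(Real.sqrt (c + t ^ 2))⁻¹) atBot (𝓝 0) := by
  have hsq : Tendsto (fun t : ℝ => t ^ 2) atBot atTop := by
    refine tendsto_atBot_atTop.2 fun b => ⟨-(|b| + 1), fun x hx => ?_⟩
    nlinarith [le_abs_self b, abs_nonneg b]
  have hct : Tendsto (fun t : ℝ => c + t ^ 2) atBot atTop :=
    tendsto_atTop_add_const_left _ c hsq
  have := ((tendsto_sqrt_atTop'.comp hct).inv_tendsto_atTop).neg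
  simpa using this

lemma integral_kernel (c : ℝ) (hc : 0 < c) :
    (∫ t : ℝ, (c + t ^ 2) ^ (-(3:ℝ)/2)) = 2 / c := by
  have hK := integrable_kernel c hc
  rw [← intervalIntegral.integral_Iic_add_Ioi (b := (0:ℝ)) hK.integrableOn hK.integrableOn]
  have hF0 : (fun t : ℝ => t / (c * Real.sqrt (c + t ^ 2))) 0 = 0 := by simp
  have hIoi : (∫ t in Ioi (0:ℝ), (c + t ^ 2) ^ (-(3:ℝ)/2)) = 1 / c - 0 := by
    have := integral_Ioi_of_hasDerivAt_of_tendsto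
      (f := fun t : ℝ => t / (c * Real.sqrt (c + t ^ 2)))
      (f' := fun t : ℝ => (c + t ^ 2) ^ (-(3:ℝ)/2))
      ((hasDerivAt_primF c hc 0).continuousAt.continuousWithinAt)
      (fun x _ => hasDerivAt_primF c hc x) hK.integrableOn (tendsto_primF_atTop c hc)
    rw [this]; simp
  have hIic : (∫ t in Iic (0:ℝ), (c + t ^ 2) ^ (-(3:ℝ)/2)) = 0 - (-(1 / c)) := by
    have := integral_Iic_of_hasDerivAt_of_tendsto
      (f := fun t : ℝ => t / (c * Real.sqrt (c + t ^ 2)))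
      (f' := fun t : ℝ => (c + t ^ 2) ^ (-(3:ℝ)/2))
      ((hasDerivAt_primF c hc 0).continuousAt.continuousWithinAt)
      (fun x _ => hasDerivAt_primF c hc x) hK.integrableOn (tendsto_primF_atBot c hc)
    rw [this]; simp
  rw [hIoi, hIic]; ring

lemma integral_mul_kernel (c : ℝ) (hc : 0 < c) :
    (∫ t : ℝ, t * (c + t ^ 2) ^ (-(3:ℝ)/2)) = 0 := by
  have hK := integrable_mul_kernel c hc
  rw [← intervalIntegral.integral_Iic_add_Ioi (b := (0:ℝ)) hK.integrableOn hK.integrableOn]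
  have hIoi : (∫ t in Ioi (0:ℝ), t * (c + t ^ 2) ^ (-(3:ℝ)/2))
      = 0 - (fun t : ℝ => -(Real.sqrt (c + t ^ 2))⁻¹) 0 := by
    exact integral_Ioi_of_hasDerivAt_of_tendsto
      ((hasDerivAt_primG c hc 0).continuousAt.continuousWithinAt)
      (fun x _ => hasDerivAt_primG c hc x) hK.integrableOn (tendsto_primG_atTop c hc)
  have hIic : (∫ t in Iic (0:ℝ), t * (c + t ^ 2) ^ (-(3:ℝ)/2))
      = (fun t : ℝ => -(Real.sqrt (c + t ^ 2))⁻¹) 0 - 0 := by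
    exact integral_Iic_of_hasDerivAt_of_tendsto
      ((hasDerivAt_primG c hc 0).continuousAt.continuousWithinAt)
      (fun x _ => hasDerivAt_primG c hc x) hK.integrableOn (tendsto_primG_atBot c hc)
  rw [hIoi, hIic]; ring

end SmearedAux

open SmearedAux

/-- If the boundary data f₀ is affine near a point a, then near a the smeared
eigenfunction satisfies √ρ·F(ρ,η) = f₀(η) + O(ρ²). -/
theorem smeared_boundary_value_affine (f₀ : ℝ → ℝ) (hc : Continuous f₀)
    (hb : ∃ C : ℝ, ∀ y : ℝ, |f₀ y| ≤ C)
    (a ε : ℝ) (hε : 0 < ε)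
    (haff : ∃ m n : ℝ, ∀ y ∈ Set.Ioo (a - ε) (a + ε), f₀ y = m * y - n) :
    ∃ C : ℝ, 0 < C ∧ ∀ η ρ : ℝ, |η - a| ≤ ε / 2 → 0 < ρ → ρ ≤ ε / 2 →
      |Real.sqrt ρ * smearedF f₀ ρ η - f₀ η| ≤ C * ρ ^ 2 := by
  obtain ⟨C₀, hC₀⟩ := hb
  obtain ⟨m, n, hmn⟩ := haff
  have hC₀0 : 0 ≤ C₀ := le_trans (abs_nonneg _) (hC₀ 0)
  set q : ℝ := (ε / 2) ^ 2 with hqdef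
  have hq : 0 < q := by positivity
  set B : ℝ := C₀ + |n| + |m| * (|a| + ε / 2) with hBdef
  have hB : 0 ≤ B := by positivity
  set H : ℝ → ℝ :=
    fun t => 2 ^ ((3:ℝ)/2) * ((B + |m| * |t|) * (q + t ^ 2) ^ (-(3:ℝ)/2)) with hHdef
  have hHnn : ∀ t, 0 ≤ H t := by
    intro t
    have h0 : (0:ℝ) < q + t ^ 2 := by positivity
    have h1 : (0:ℝ) ≤ B + |m| * |t| := by positivity
    have h2 : (0:ℝ) ≤ (q + t ^ 2) ^ (-(3:ℝ)/2) := Real.rpow_nonneg h0.le _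
    positivity
  have hHint : Integrable H := by
    have h1 : Integrable (fun t : ℝ => B * (q + t ^ 2) ^ (-(3:ℝ)/2)) :=
      (integrable_kernel q hq).const_mul B
    have h2 : Integrable (fun t : ℝ => |m| * |t * (q + t ^ 2) ^ (-(3:ℝ)/2)|) :=
      (integrable_mul_kernel q hq).abs.const_mul |m|
    have h3 := (h1.add h2).const_mul ((2:ℝ) ^ ((3:ℝ)/2))
    refine h3.congr (Filter.Eventually.of_forall fun t => ?_)
    have h0 : (0:ℝ) < q + t ^ 2 := by positivity
    simp only [Pi.add_apply, hHdef]
    rw [abs_mul, abs_of_nonneg (Real.rpow_nonneg h0.le _)]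
    ring
  set M : ℝ := ∫ t, H t with hMdef
  have hM0 : 0 ≤ M := integral_nonneg hHnn
  refine ⟨M / 2 + 1, by positivity, ?_⟩
  intro η ρ hη hρ hρε
  have hc2 : (0:ℝ) < ρ ^ 2 := by positivity
  set K : ℝ → ℝ := fun y => (ρ ^ 2 + (η - y) ^ 2) ^ (-(3:ℝ)/2) with hKdef
  have hKeq : ∀ y, K y = (ρ ^ 2 + (y - η) ^ 2) ^ (-(3:ℝ)/2) := by
    intro y
    have : (η - y) ^ 2 = (y - η) ^ 2 := by ring
    rw [hKdef]; simp only []; rw [this]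
  have hKnn : ∀ y, 0 ≤ K y := by
    intro y
    rw [hKeq]
    exact Real.rpow_nonneg (by positivity) _
  have hKint : Integrable K := by
    have h := (integrable_kernel (ρ ^ 2) hc2).comp_sub_right η
    exact h.congr (Filter.Eventually.of_forall fun y => (hKeq y).symm)
  have hfK : Integrable (fun y => f₀ y * K y) :=
    hKint.bdd_mul hc.aestronglyMeasurable (c := C₀) (Filter.Eventually.of_forall fun y => by
      rw [Real.norm_eq_abs]; exact hC₀ y)
  have htK : Integrable (fun y => (y - η) * K y) := by
    have h := (integrable_mul_kernel (ρ ^ 2) hc2).comp_sub_right η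
    refine h.congr (Filter.Eventually.of_forall fun y => ?_)
    show (y - η) * (ρ ^ 2 + (y - η) ^ 2) ^ (-(3:ℝ)/2) = (y - η) * K y
    rw [hKeq y]
  have hgK : Integrable (fun y => (m * y - n) * K y) := by
    have heq : (fun y => (m * y - n) * K y)
        = fun y => m * ((y - η) * K y) + (m * η - n) * K y := by
      funext y; ring
    rw [heq]
    exact (htK.const_mul m).add (hKint.const_mul _)
  have hIK : ∫ y, K y = 2 / ρ ^ 2 := by
    rw [integral_congr_ae (Filter.Eventually.of_forall hKeq)]
    rw [integral_sub_right_eq_self (fun t => (ρ ^ 2 + t ^ 2) ^ (-(3:ℝ)/2)) η]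
    exact integral_kernel _ hc2
  have hItK : ∫ y, (y - η) * K y = 0 := by
    have heq : ∀ y, (y - η) * K y = (y - η) * (ρ ^ 2 + (y - η) ^ 2) ^ (-(3:ℝ)/2) := by
      intro y; rw [hKeq]
    rw [integral_congr_ae (Filter.Eventually.of_forall heq)]
    rw [integral_sub_right_eq_self (fun t => t * (ρ ^ 2 + t ^ 2) ^ (-(3:ℝ)/2)) η]
    exact integral_mul_kernel _ hc2
  have hfη : f₀ η = m * η - n := by
    apply hmn
    obtain ⟨h1, h2⟩ := abs_le.1 hη
    constructor <;> linarith
  have hsmear : Real.sqrt ρ * smearedF f₀ ρ η = ρ ^ 2 / 2 * ∫ y, f₀ y * K y := by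
    have hpow : Real.sqrt ρ * (ρ ^ ((3:ℝ)/2) / 2) = ρ ^ 2 / 2 := by
      rw [Real.sqrt_eq_rpow, ← mul_div_assoc, ← Real.rpow_add hρ]
      have h2 : (1:ℝ)/2 + (3:ℝ)/2 = ((2:ℕ):ℝ) := by norm_num
      rw [h2, Real.rpow_natCast]
    unfold smearedF
    rw [← mul_assoc, hpow]
  have hgI : ρ ^ 2 / 2 * ∫ y, (m * y - n) * K y = m * η - n := by
    have hsplit : ∫ y, (m * y - n) * K y
        = m * (∫ y, (y - η) * K y) + (m * η - n) * ∫ y, K y := by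
      rw [← integral_const_mul, ← integral_const_mul,
        ← integral_add (htK.const_mul m) (hKint.const_mul _)]
      exact integral_congr_ae (Filter.Eventually.of_forall fun y => by ring)
    rw [hsplit, hItK, hIK]
    field_simp
    ring
  have key : Real.sqrt ρ * smearedF f₀ ρ η - f₀ η
      = ρ ^ 2 / 2 * ∫ y, (f₀ y - (m * y - n)) * K y := by
    rw [hsmear, hfη, ← hgI, ← mul_sub, ← integral_sub hfK hgK]
    congr 1
    exact integral_congr_ae (Filter.Eventually.of_forall fun y => by ring)
  have hpt : ∀ y, |(f₀ y - (m * y - n)) * K y| ≤ H (y - η) := by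
    intro y
    by_cases hy : |y - η| < ε / 2
    · have hyI : y ∈ Set.Ioo (a - ε) (a + ε) := by
        obtain ⟨h1, h2⟩ := abs_lt.1 hy
        obtain ⟨h3, h4⟩ := abs_le.1 hη
        constructor <;> linarith
      rw [hmn y hyI, sub_self, zero_mul, abs_zero]
      exact hHnn _
    · push_neg at hy
      have ht2 : q ≤ (y - η) ^ 2 := by
        rw [hqdef, ← sq_abs (y - η)]
        exact pow_le_pow_left₀ (by positivity) hy 2
      have h0 : (0:ℝ) < ρ ^ 2 + (y - η) ^ 2 := by positivity
      have hhalf : (q + (y - η) ^ 2) / 2 ≤ ρ ^ 2 + (y - η) ^ 2 := by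
        nlinarith [sq_nonneg ρ]
      have hKb : K y ≤ 2 ^ ((3:ℝ)/2) * (q + (y - η) ^ 2) ^ (-(3:ℝ)/2) := by
        have h1 : (ρ ^ 2 + (y - η) ^ 2) ^ (-(3:ℝ)/2)
            ≤ ((q + (y - η) ^ 2) / 2) ^ (-(3:ℝ)/2) :=
          Real.rpow_le_rpow_of_nonpos (by positivity) hhalf (by norm_num)
        have h2 : ((q + (y - η) ^ 2) / 2) ^ (-(3:ℝ)/2)
            = 2 ^ ((3:ℝ)/2) * (q + (y - η) ^ 2) ^ (-(3:ℝ)/2) := by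
          rw [div_eq_mul_inv, Real.mul_rpow (by positivity) (by norm_num)]
          have h3 : ((2:ℝ)⁻¹) ^ (-(3:ℝ)/2) = 2 ^ ((3:ℝ)/2) := by
            rw [Real.inv_rpow (by norm_num), show (-(3:ℝ)/2) = -((3:ℝ)/2) by ring,
              Real.rpow_neg (by norm_num), inv_inv]
          rw [h3]; ring
        rw [hKeq y]
        exact h1.trans_eq h2
      have hfb : |f₀ y - (m * y - n)| ≤ B + |m| * |y - η| := by
        have h1 : |f₀ y - (m * y - n)| ≤ |f₀ y| + |m * y - n| := abs_sub _ _
        have h2 : |m * y - n| ≤ |m| * |y| + |n| := by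
          calc |m * y - n| ≤ |m * y| + |n| := abs_sub _ _
            _ = |m| * |y| + |n| := by rw [abs_mul]
        have h3 : |y| ≤ |y - η| + |η| := by
          calc |y| = |(y - η) + η| := by ring_nf
            _ ≤ |y - η| + |η| := abs_add_le _ _
        have h4 : |η| ≤ |a| + ε / 2 := by
          calc |η| = |(η - a) + a| := by ring_nf
            _ ≤ |η - a| + |a| := abs_add_le _ _
            _ ≤ ε / 2 + |a| := by linarith
            _ = |a| + ε / 2 := by ring
        have h5 := hC₀ y
        have h6 : |m| * |y| ≤ |m| * (|y - η| + (|a| + ε / 2)) :=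
          mul_le_mul_of_nonneg_left (le_trans h3 (by linarith)) (abs_nonneg m)
        rw [mul_add] at h6
        rw [hBdef]
        linarith
      rw [abs_mul, abs_of_nonneg (hKnn y)]
      calc |f₀ y - (m * y - n)| * K y
          ≤ (B + |m| * |y - η|) * (2 ^ ((3:ℝ)/2) * (q + (y - η) ^ 2) ^ (-(3:ℝ)/2)) := by
            exact mul_le_mul hfb hKb (hKnn y) (add_nonneg hB (by positivity))
        _ = H (y - η) := by simp only [hHdef]; ring
  have hdiff : Integrable (fun y => (f₀ y - (m * y - n)) * K y) :=
    (hfK.sub hgK).congr (Filter.Eventually.of_forall fun y => by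
      simp only [Pi.sub_apply]; ring)
  have hHshift : Integrable (fun y => H (y - η)) := hHint.comp_sub_right η
  have hIb : (∫ y, |(f₀ y - (m * y - n)) * K y|) ≤ ∫ y, H (y - η) :=
    integral_mono hdiff.abs hHshift hpt
  have hIH : (∫ y, H (y - η)) = M := integral_sub_right_eq_self H η
  have habs : |∫ y, (f₀ y - (m * y - n)) * K y| ≤ M := by
    calc |∫ y, (f₀ y - (m * y - n)) * K y|
        ≤ ∫ y, |(f₀ y - (m * y - n)) * K y| := by
          simpa only [Real.norm_eq_abs] using
            norm_integral_le_integral_norm (μ := volume)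
              (fun y => (f₀ y - (m * y - n)) * K y)
      _ ≤ ∫ y, H (y - η) := hIb
      _ = M := hIH
  rw [key, abs_mul, abs_of_nonneg (by positivity : (0:ℝ) ≤ ρ ^ 2 / 2)]
  calc ρ ^ 2 / 2 * |∫ y, (f₀ y - (m * y - n)) * K y|
      ≤ ρ ^ 2 / 2 * M := by gcongr
    _ ≤ (M / 2 + 1) * ρ ^ 2 := by nlinarith
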